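/- Fix E > 0 and define g : (0, 2E) → ℝ by g(x) = (1/2)·c(x, 2E − x). Then for every x with 0 < x < 2E, g is twice differentiable at x with g''(x) = (1/(2·σ·√(2πτ))) · ( (1/x)·exp(−d1(x, 2E−x)²/2) + (e^{−rτ}/(2E−x))·exp(−d2(x, 2E−x)²/2) + (2/(2E−x))·exp(−d1(x, 2E−x)²/2) ). -/

import Mathlib

open MeasureTheory

/-- Standard normal cumulative distribution function. -/
noncomputable def stdNormalCDF (y : ℝ) : ℝ :=
  ∫ t in Set.Iic y, Real.exp (-t ^ 2 / 2) / Real.sqrt (2 * Real.pi)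

/-- Black–Scholes `d1`. -/
noncomputable def bsD1 (r σ τ x K : ℝ) : ℝ :=
  (Real.log (x / K) + (r + σ ^ 2 / 2) * τ) / (σ * Real.sqrt τ)

/-- Black–Scholes `d2`. -/
noncomputable def bsD2 (r σ τ x K : ℝ) : ℝ :=
  bsD1 r σ τ x K - σ * Real.sqrt τ

/-- Black–Scholes European call price. -/
noncomputable def bsCall (r σ τ x K : ℝ) : ℝ :=
  x * stdNormalCDF (bsD1 r σ τ x K) - K * Real.exp (-(r * τ)) * stdNormalCDF (bsD2 r σ τ x K)

lemma integrable_gauss : Integrable (fun t : ℝ => Real.exp (-t ^ 2 / 2) / Real.sqrt (2 * Real.pi)) := by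
  have h : Integrable (fun t : ℝ => Real.exp (-(1/2 : ℝ) * t ^ 2)) :=
    integrable_exp_neg_mul_sq (by norm_num)
  have := h.div_const (Real.sqrt (2 * Real.pi))
  convert this using 2 with t
  ring_nf

lemma hasDerivAt_stdNormalCDF (y : ℝ) :
    HasDerivAt stdNormalCDF (Real.exp (-y ^ 2 / 2) / Real.sqrt (2 * Real.pi)) y := by
  set f : ℝ → ℝ := fun t => Real.exp (-t ^ 2 / 2) / Real.sqrt (2 * Real.pi) with hf
  have hcont : Continuous f := by
    apply Continuous.div_const
    exact Real.continuous_exp.comp (by continuity)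
  have heq : stdNormalCDF = fun z => (∫ t in Set.Iic (0:ℝ), f t) + ∫ t in (0:ℝ)..z, f t := by
    funext z
    rw [← intervalIntegral.integral_Iic_sub_Iic integrable_gauss.integrableOn
      integrable_gauss.integrableOn]
    simp only [stdNormalCDF, hf]; ring
  rw [heq]
  have : HasDerivAt (fun z => ∫ t in (0:ℝ)..z, f t) (f y) y :=
    intervalIntegral.integral_hasDerivAt_right integrable_gauss.intervalIntegrable
      hcont.aestronglyMeasurable.stronglyMeasurableAtFilter hcont.continuousAt
  exact this.const_add _

lemma bs_identity (r σ τ : ℝ) (hσ : 0 < σ) (hτ : 0 < τ) (x K : ℝ) (hx : 0 < x) (hK : 0 < K) :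
    x * Real.exp (-(bsD1 r σ τ x K) ^ 2 / 2)
      = K * Real.exp (-(r * τ)) * Real.exp (-(bsD2 r σ τ x K) ^ 2 / 2) := by
  have hst : (0:ℝ) < σ * Real.sqrt τ := mul_pos hσ (Real.sqrt_pos.mpr hτ)
  have hs2 : (σ * Real.sqrt τ) ^ 2 = σ ^ 2 * τ := by
    rw [mul_pow, Real.sq_sqrt hτ.le]
  have hd1s : bsD1 r σ τ x K * (σ * Real.sqrt τ)
      = (Real.log x - Real.log K) + (r + σ ^ 2 / 2) * τ := by
    unfold bsD1
    rw [Real.log_div hx.ne' hK.ne']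
    field_simp
  set d := bsD1 r σ τ x K with hd
  rw [bsD2, ← hd]
  clear_value d
  rw [← Real.exp_log hx, ← Real.exp_log hK, ← Real.exp_add, ← Real.exp_add, ← Real.exp_add]
  congr 1
  nlinarith [hd1s, hs2]

theorem asian_continuation_second_derivative (r σ τ : ℝ) (hσ : 0 < σ) (hτ : 0 < τ)
    (E : ℝ) (hE : 0 < E) :
    ∀ x : ℝ, 0 < x → x < 2 * E →
      DifferentiableAt ℝ (fun y => (1 / 2) * bsCall r σ τ y (2 * E - y)) x ∧
      HasDerivAt (deriv (fun y => (1 / 2) * bsCall r σ τ y (2 * E - y)))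
        ((1 / (2 * σ * Real.sqrt (2 * Real.pi * τ))) *
          ((1 / x) * Real.exp (-(bsD1 r σ τ x (2 * E - x)) ^ 2 / 2)
            + (Real.exp (-(r * τ)) / (2 * E - x)) *
                Real.exp (-(bsD2 r σ τ x (2 * E - x)) ^ 2 / 2)
            + (2 / (2 * E - x)) * Real.exp (-(bsD1 r σ τ x (2 * E - x)) ^ 2 / 2))) x := by
  intro x hx hx2
  have h2π : (0:ℝ) < 2 * Real.pi := by positivity
  have hsπ : (0:ℝ) < Real.sqrt (2 * Real.pi) := Real.sqrt_pos.mpr h2π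
  have hsτ : (0:ℝ) < Real.sqrt τ := Real.sqrt_pos.mpr hτ
  have hst : (0:ℝ) < σ * Real.sqrt τ := mul_pos hσ hsτ
  -- derivative of z ↦ bsD1 r σ τ z (2E - z)
  have hD1 : ∀ y : ℝ, 0 < y → y < 2 * E →
      HasDerivAt (fun z => bsD1 r σ τ z (2 * E - z))
        (2 * E / (y * (2 * E - y)) / (σ * Real.sqrt τ)) y := by
    intro y hy1 hy2
    have hK : (0:ℝ) < 2 * E - y := by linarith
    have hq : HasDerivAt (fun z : ℝ => z / (2 * E - z))
        ((1 * (2 * E - y) - y * (0 - 1)) / (2 * E - y) ^ 2) y :=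
      ((hasDerivAt_id' y)).div ((hasDerivAt_const y (2 * E)).sub (hasDerivAt_id' y)) hK.ne'
    have hlog := hq.log (ne_of_gt (div_pos hy1 hK))
    have h := (hlog.add_const ((r + σ ^ 2 / 2) * τ)).div_const (σ * Real.sqrt τ)
    have hfun : (fun z : ℝ => bsD1 r σ τ z (2 * E - z))
        = (fun z : ℝ => (Real.log (z / (2 * E - z)) + (r + σ ^ 2 / 2) * τ) / (σ * Real.sqrt τ)) := rfl
    rw [hfun]
    refine h.congr_deriv ?_
    field_simp
    ring
  have hN1 : ∀ y : ℝ, 0 < y → y < 2 * E →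
      HasDerivAt (fun z => stdNormalCDF (bsD1 r σ τ z (2 * E - z)))
        (Real.exp (-(bsD1 r σ τ y (2 * E - y)) ^ 2 / 2) / Real.sqrt (2 * Real.pi)
          * (2 * E / (y * (2 * E - y)) / (σ * Real.sqrt τ))) y := by
    intro y hy1 hy2
    exact (hasDerivAt_stdNormalCDF _).comp y (hD1 y hy1 hy2)
  have hN2 : ∀ y : ℝ, 0 < y → y < 2 * E →
      HasDerivAt (fun z => stdNormalCDF (bsD2 r σ τ z (2 * E - z)))
        (Real.exp (-(bsD2 r σ τ y (2 * E - y)) ^ 2 / 2) / Real.sqrt (2 * Real.pi)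
          * (2 * E / (y * (2 * E - y)) / (σ * Real.sqrt τ))) y := by
    intro y hy1 hy2
    have := (hasDerivAt_stdNormalCDF (bsD2 r σ τ y (2 * E - y))).comp y
      ((hD1 y hy1 hy2).sub_const (σ * Real.sqrt τ))
    exact this
  -- first derivative
  have hg : ∀ y : ℝ, 0 < y → y < 2 * E →
      HasDerivAt (fun z => (1 / 2 : ℝ) * bsCall r σ τ z (2 * E - z))
        ((1 / 2 : ℝ) * (stdNormalCDF (bsD1 r σ τ y (2 * E - y))
          + Real.exp (-(r * τ)) * stdNormalCDF (bsD2 r σ τ y (2 * E - y)))) y := by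
    intro y hy1 hy2
    have hK : (0:ℝ) < 2 * E - y := by linarith
    have t1 := ((hasDerivAt_id' y)).mul (hN1 y hy1 hy2)
    have t2 := (((hasDerivAt_const y (2 * E)).sub (hasDerivAt_id' y)).mul_const
      (Real.exp (-(r * τ)))).mul (hN2 y hy1 hy2)
    have h := (t1.sub t2).const_mul (1 / 2 : ℝ)
    have hfun : (fun z : ℝ => (1 / 2 : ℝ) * bsCall r σ τ z (2 * E - z))
        = (fun z : ℝ => (1 / 2 : ℝ) * (z * stdNormalCDF (bsD1 r σ τ z (2 * E - z))
            - (2 * E - z) * Real.exp (-(r * τ)) * stdNormalCDF (bsD2 r σ τ z (2 * E - z)))) := rfl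
    rw [hfun]
    refine h.congr_deriv ?_
    simp only [Pi.sub_apply]
    have key := bs_identity r σ τ hσ hτ y (2 * E - y) hy1 hK
    have he2 : Real.exp (-(bsD2 r σ τ y (2 * E - y)) ^ 2 / 2)
        = y * Real.exp (-(bsD1 r σ τ y (2 * E - y)) ^ 2 / 2)
          / ((2 * E - y) * Real.exp (-(r * τ))) := by
      field_simp
      rw [neg_div, neg_div] at key
      linarith [key]
    rw [he2]
    have her : Real.exp (-(r * τ)) ≠ 0 := Real.exp_ne_zero _
    field_simp
    ring
  have hKx : (0:ℝ) < 2 * E - x := by linarith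
  refine ⟨(hg x hx hx2).differentiableAt, ?_⟩
  have hmem : Set.Ioo (0:ℝ) (2 * E) ∈ nhds x := isOpen_Ioo.mem_nhds ⟨hx, hx2⟩
  have hEq : deriv (fun z => (1 / 2 : ℝ) * bsCall r σ τ z (2 * E - z))
      =ᶠ[nhds x] (fun y => (1 / 2 : ℝ) * (stdNormalCDF (bsD1 r σ τ y (2 * E - y))
        + Real.exp (-(r * τ)) * stdNormalCDF (bsD2 r σ τ y (2 * E - y)))) := by
    filter_upwards [hmem] with y hy
    exact (hg y hy.1 hy.2).deriv
  have hH := ((hN1 x hx hx2).add ((hN2 x hx hx2).const_mul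
    (Real.exp (-(r * τ))))).const_mul (1 / 2 : ℝ)
  have hfinal := hH.congr_of_eventuallyEq hEq
  refine hfinal.congr_deriv ?_
  have key := bs_identity r σ τ hσ hτ x (2 * E - x) hx hKx
  have he2 : Real.exp (-(bsD2 r σ τ x (2 * E - x)) ^ 2 / 2)
      = x * Real.exp (-(bsD1 r σ τ x (2 * E - x)) ^ 2 / 2)
        / ((2 * E - x) * Real.exp (-(r * τ))) := by
    field_simp
    rw [neg_div, neg_div] at key
    linarith [key]
  rw [he2, Real.sqrt_mul h2π.le τ]
  have her : Real.exp (-(r * τ)) ≠ 0 := Real.exp_ne_zero _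
  field_simp
  ring
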